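/- Let e be a Dice expression (with Booleans and tuples but without function calls), and suppose the typed compilation judgment {xi : τi} ⊢ e : τ ⤳ (φ̂, γ, w) holds. Then for any values vi : τi and any value v : τ, the unnormalized semantics satisfies ⟦e[xi ↦ vi]⟧(v) = WMC(((φ̂ ⇔τ v) ∧ γ)[xi ↦τi vi], w). -/

import Mathlib

/-! The Dice language with Booleans and tuples (no function calls), its
unnormalized denotational semantics, the typed compilation to weighted Boolean
formulas, and the correctness statement relating the two via weighted model
counting. -/

/-- Dice types: `τ ::= Bool | τ1 × τ2`. -/
inductive Ty : Type
  | bool : Ty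
  | prod : Ty → Ty → Ty
deriving DecidableEq

/-- Dice values: `v ::= true | false | (v, v)`. -/
inductive Val : Type
  | bool : Bool → Val
  | pair : Val → Val → Val
deriving DecidableEq

/-- Typing of values. -/
def Val.hasTy : Val → Ty → Bool
  | .bool _, .bool => true
  | .pair v1 v2, .prod τ1 τ2 => v1.hasTy τ1 && v2.hasTy τ2
  | _, _ => false

/-- The (finitely many) values of a given type. -/
def Ty.vals : Ty → List Val
  | .bool => [.bool false, .bool true]
  | .prod τ1 τ2 => τ1.vals.flatMap (fun v1 => τ2.vals.map (fun v2 => .pair v1 v2))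

/-- Atomic expressions: variables and values. -/
inductive AExp : Type
  | var : String → AExp
  | val : Val → AExp

/-- Dice expressions:
`e ::= a | fst a | snd a | (a, a) | let x:τ = e in e | flip θ
     | if a then e else e | observe a`. -/
inductive Exp : Type
  | atom : AExp → Exp
  | fst : AExp → Exp
  | snd : AExp → Exp
  | pair : AExp → AExp → Exp
  | letin : String → Ty → Exp → Exp → Exp
  | flip : ℝ → Exp
  | ite : AExp → Exp → Exp → Exp
  | obs : AExp → Exp

/-- Substitution of values for free variables in an atomic expression. -/
def AExp.substEnv (ρ : String → Option Val) : AExp → AExp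
  | .val v => .val v
  | .var x => match ρ x with
      | some v => .val v
      | none => .var x

/-- Capture-avoiding substitution of values for free variables: `e[xi ↦ vi]`
for the substitution described by `ρ`. -/
def Exp.substEnv (ρ : String → Option Val) : Exp → Exp
  | .atom a => .atom (a.substEnv ρ)
  | .fst a => .fst (a.substEnv ρ)
  | .snd a => .snd (a.substEnv ρ)
  | .pair a1 a2 => .pair (a1.substEnv ρ) (a2.substEnv ρ)
  | .letin x τ e1 e2 =>
      .letin x τ (e1.substEnv ρ) (e2.substEnv (fun y => if y = x then none else ρ y))
  | .flip θ => .flip θ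
  | .ite a e1 e2 => .ite (a.substEnv ρ) (e1.substEnv ρ) (e2.substEnv ρ)
  | .obs a => .obs (a.substEnv ρ)

/-- Size of an expression (used for termination of the semantics). -/
def Exp.size : Exp → ℕ
  | .atom _ => 1
  | .fst _ => 1
  | .snd _ => 1
  | .pair _ _ => 1
  | .letin _ _ e1 e2 => e1.size + e2.size + 1
  | .flip _ => 1
  | .ite _ e1 e2 => e1.size + e2.size + 1
  | .obs _ => 1

theorem Exp.size_substEnv (ρ : String → Option Val) (e : Exp) :
    (e.substEnv ρ).size = e.size := by
  induction e generalizing ρ <;> simp [Exp.substEnv, Exp.size, *]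

/-- The unnormalized denotational semantics `⟦e⟧ : Val → ℝ` of a (closed) Dice
expression:
* `⟦v1⟧(v) = 1` if `v = v1` else `0`;
* `⟦fst (v1,v2)⟧(v) = 1` if `v = v1` else `0`, similarly for `snd`;
* `⟦flip θ⟧(true) = θ`, `⟦flip θ⟧(false) = 1 − θ`, `0` on other values;
* `⟦if true then e1 else e2⟧ = ⟦e1⟧`, `⟦if false then e1 else e2⟧ = ⟦e2⟧`;
* `⟦observe v1⟧(v) = 1` if `v1 = true` and `v = true`, else `0`;
* `⟦let x = e1 in e2⟧(v) = Σ_{v'} ⟦e1⟧(v') · ⟦e2[x ↦ v']⟧(v)`, summing over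
  the values `v'` of the annotated type of the bound variable.
(Expressions that still contain free variables in evaluation position get the
always-zero semantics, for totality.) -/
noncomputable def Exp.sem : Exp → Val → ℝ
  | .atom (.val v1), v => if v = v1 then 1 else 0
  | .atom (.var _), _ => 0
  | .fst (.val (.pair v1 _)), v => if v = v1 then 1 else 0
  | .fst _, _ => 0
  | .snd (.val (.pair _ v2)), v => if v = v2 then 1 else 0
  | .snd _, _ => 0
  | .pair (.val v1) (.val v2), v => if v = .pair v1 v2 then 1 else 0
  | .pair _ _, _ => 0
  | .flip θ, .bool b => if b then θ else 1 - θ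
  | .flip _, _ => 0
  | .ite (.val (.bool true)) e1 _, v => e1.sem v
  | .ite (.val (.bool false)) _ e2, v => e2.sem v
  | .ite _ _ _, _ => 0
  | .obs (.val (.bool true)), v => if v = .bool true then 1 else 0
  | .obs _, _ => 0
  | .letin x τ1 e1 e2, v =>
      (τ1.vals.map (fun v' =>
        e1.sem v' * (e2.substEnv (fun y => if y = x then some v' else none)).sem v)).sum
termination_by e _ => e.size
decreasing_by all_goals · simp [Exp.size, Exp.size_substEnv] <;> omega

/-- Propositional formulas over flip variables (numbered by `ℕ`) and program
variables (a program-variable name together with a path of left/right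
projections; `false` = left, `true` = right).  The derived names `x_l` and
`x_r` used by the form function are modeled by extending the path. -/
inductive Form : Type
  | tt : Form
  | ff : Form
  | fvar : ℕ → Form
  | pvar : String → List Bool → Form
  | not : Form → Form
  | and : Form → Form → Form
  | or : Form → Form → Form
  | iff : Form → Form → Form

/-- Evaluation of a formula under truth assignments for flip and program
variables. -/
def Form.eval (σ : ℕ → Bool) (ρ : String → List Bool → Bool) : Form → Bool
  | .tt => true
  | .ff => false
  | .fvar i => σ i
  | .pvar x p => ρ x p
  | .not φ => !(φ.eval σ ρ)
  | .and φ ψ => φ.eval σ ρ && ψ.eval σ ρ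
  | .or φ ψ => φ.eval σ ρ || ψ.eval σ ρ
  | .iff φ ψ => φ.eval σ ρ == ψ.eval σ ρ

/-- Tuples of Boolean formulas, shaped like a Dice type. -/
inductive TForm : Type
  | base : Form → TForm
  | pair : TForm → TForm → TForm

/-- The form function: `form_Bool(x) = x` and
`form_{τ1×τ2}(x) = (form_{τ1}(x_l), form_{τ2}(x_r))`, derived names being
modeled by extending the projection path. -/
def formVar (x : String) : Ty → List Bool → TForm
  | .bool, p => .base (.pvar x p)
  | .prod τ1 τ2, p =>
      .pair (formVar x τ1 (p ++ [false])) (formVar x τ2 (p ++ [true]))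

/-- A value interpreted as a (tuple of) constant Boolean formula(s). -/
def Val.toForm : Val → TForm
  | .bool b => .base (if b then .tt else .ff)
  | .pair v1 v2 => .pair v1.toForm v2.toForm

/-- Pointwise iff `φ̂1 ⇔τ φ̂2` (shape mismatch yields the false formula). -/
def TForm.tiff : TForm → TForm → Form
  | .base φ, .base ψ => .iff φ ψ
  | .pair a b, .pair c d => .and (a.tiff c) (b.tiff d)
  | _, _ => .ff

/-- Broadcasted conjunction `φ ∧τ φ̂`. -/
def TForm.band : TForm → Form → TForm
  | .base ψ, φ => .base (.and φ ψ)
  | .pair a b, φ => .pair (a.band φ) (b.band φ)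

/-- Pointwise disjunction `φ̂1 ∨τ φ̂2` (shape mismatch yields the left input). -/
def TForm.tor : TForm → TForm → TForm
  | .base a, .base b => .base (.or a b)
  | .pair a b, .pair c d => .pair (a.tor c) (b.tor d)
  | t, _ => t

/-- The component of a tuple of formulas at a given projection path. -/
def TForm.lookup : TForm → List Bool → Option Form
  | .base φ, [] => some φ
  | .pair a _, false :: p => a.lookup p
  | .pair _ b, true :: p => b.lookup p
  | _, _ => none

/-- Typed substitution `φ[x ↦τ φ̂]` on a single formula: every program
variable `(x, p)` derived from `x` is replaced by the component of the tuple
`φ̂` at path `p` (this is exactly the effect of the sequential substitutions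
`φ[x_l ↦τa φ̂a][x_r ↦τb φ̂b]` of the recursive definition). -/
def Form.tsubst : Form → String → TForm → Form
  | .tt, _, _ => .tt
  | .ff, _, _ => .ff
  | .fvar i, _, _ => .fvar i
  | .pvar y p, x, t =>
      if y = x then (t.lookup p).getD (.pvar y p) else .pvar y p
  | .not φ, x, t => .not (φ.tsubst x t)
  | .and φ ψ, x, t => .and (φ.tsubst x t) (ψ.tsubst x t)
  | .or φ ψ, x, t => .or (φ.tsubst x t) (ψ.tsubst x t)
  | .iff φ ψ, x, t => .iff (φ.tsubst x t) (ψ.tsubst x t)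

/-- Typed substitution on a tuple of formulas (componentwise). -/
def TForm.tsubst : TForm → String → TForm → TForm
  | .base φ, x, t => .base (φ.tsubst x t)
  | .pair a b, x, t => .pair (a.tsubst x t) (b.tsubst x t)

/-- Substitution `[xi ↦τi vi]` of values for all program variables of a
formula: each variable `(x, p)` is replaced by the constant component of
`(ρ x)` at path `p`. -/
def Form.substProg (ρ : String → Val) : Form → Form
  | .tt => .tt
  | .ff => .ff
  | .fvar i => .fvar i
  | .pvar x p => ((Val.toForm (ρ x)).lookup p).getD .ff
  | .not φ => .not (φ.substProg ρ)
  | .and φ ψ => .and (φ.substProg ρ) (ψ.substProg ρ)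
  | .or φ ψ => .or (φ.substProg ρ) (ψ.substProg ρ)
  | .iff φ ψ => .iff (φ.substProg ρ) (ψ.substProg ρ)

/-- Compilation of an atomic expression at a type: a variable compiles to its
form, a value to the corresponding tuple of constants. -/
def AExp.compT (Γ : String → Option Ty) : AExp → Ty → Option TForm
  | .var x, τ => if Γ x = some τ then some (formVar x τ []) else none
  | .val v, τ => if v.hasTy τ then some v.toForm else none

/-- The typed compilation judgment `Γ ⊢ e : τ ⤳ (φ̂, γ, w)`, producing a tuple
of Boolean formulas `φ̂` shaped like `τ`, an accepting formula `γ`, and a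
weight function `w`.  Freshness of flip variables is modeled by threading a
counter: `TComp Γ e τ n m φ̂ γ w` means `e` compiles using the fresh flip
variables `n, …, m−1`; the weight function is a single global function
constrained at each flip variable (the union of weight functions with disjoint
domains). -/
inductive TComp :
    (String → Option Ty) → Exp → Ty → ℕ → ℕ → TForm → Form → (ℕ → Bool → ℝ) → Prop
  | atom (Γ : String → Option Ty) (a : AExp) (τ : Ty) (t : TForm) (n : ℕ)
      (w : ℕ → Bool → ℝ) (h : a.compT Γ τ = some t) :
      TComp Γ (.atom a) τ n n t .tt w
  | fst (Γ : String → Option Ty) (a : AExp) (τ1 τ2 : Ty) (t1 t2 : TForm) (n : ℕ)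
      (w : ℕ → Bool → ℝ) (h : a.compT Γ (.prod τ1 τ2) = some (.pair t1 t2)) :
      TComp Γ (.fst a) τ1 n n t1 .tt w
  | snd (Γ : String → Option Ty) (a : AExp) (τ1 τ2 : Ty) (t1 t2 : TForm) (n : ℕ)
      (w : ℕ → Bool → ℝ) (h : a.compT Γ (.prod τ1 τ2) = some (.pair t1 t2)) :
      TComp Γ (.snd a) τ2 n n t2 .tt w
  | pair (Γ : String → Option Ty) (a1 a2 : AExp) (τ1 τ2 : Ty) (t1 t2 : TForm)
      (n : ℕ) (w : ℕ → Bool → ℝ)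
      (h1 : a1.compT Γ τ1 = some t1) (h2 : a2.compT Γ τ2 = some t2) :
      TComp Γ (.pair a1 a2) (.prod τ1 τ2) n n (.pair t1 t2) .tt w
  | flip (Γ : String → Option Ty) (θ : ℝ) (n : ℕ) (w : ℕ → Bool → ℝ)
      (h0 : 0 ≤ θ) (h1 : θ ≤ 1) (hwt : w n true = θ) (hwf : w n false = 1 - θ) :
      TComp Γ (.flip θ) .bool n (n + 1) (.base (.fvar n)) .tt w
  | obs (Γ : String → Option Ty) (a : AExp) (φa : Form) (n : ℕ)
      (w : ℕ → Bool → ℝ) (h : a.compT Γ .bool = some (.base φa)) :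
      TComp Γ (.obs a) .bool n n (.base .tt) φa w
  | ite (Γ : String → Option Ty) (a : AExp) (eT eE : Exp) (τ : Ty)
      (φg : Form) (tT tE : TForm) (γT γE : Form) (n m k : ℕ) (w : ℕ → Bool → ℝ)
      (hg : a.compT Γ .bool = some (.base φg))
      (hT : TComp Γ eT τ n m tT γT w) (hE : TComp Γ eE τ m k tE γE w) :
      TComp Γ (.ite a eT eE) τ n k
        ((tT.band φg).tor (tE.band (.not φg)))
        (.or (.and φg γT) (.and (.not φg) γE)) w
  | letin (Γ : String → Option Ty) (x : String) (τ1 τ2 : Ty) (e1 e2 : Exp)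
      (t1 t2 : TForm) (γ1 γ2 : Form) (n m k : ℕ) (w : ℕ → Bool → ℝ)
      (h1 : TComp Γ e1 τ1 n m t1 γ1 w)
      (h2 : TComp (fun y => if y = x then some τ1 else Γ y) e2 τ2 m k t2 γ2 w) :
      TComp Γ (.letin x τ1 e1 e2) τ2 n k
        (t2.tsubst x t1) (.and γ1 (γ2.tsubst x t1)) w

/-- The weighted model count of a formula over the flip variables `0, …, n−1`:
`WMC(φ, w) = Σ_{ω ⊨ φ} Π_{l ∈ ω} w(l)`.  (Program variables, which do not
occur after substitution, are evaluated as `false`.) -/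
noncomputable def WMC (n : ℕ) (φ : Form) (w : ℕ → Bool → ℝ) : ℝ :=
  ∑ σ : Fin n → Bool,
    if φ.eval (fun i => if h : i < n then σ ⟨i, h⟩ else false) (fun _ _ => false)
    then ∏ i : Fin n, w i (σ i) else 0

/-! ### Auxiliary definitions -/

/-- The all-false program-variable assignment. -/
def pfalse : String → List Bool → Bool := fun _ _ => false

/-- All flip variables of a formula lie in `[lo, hi)`. -/
def Form.fvIn (lo hi : ℕ) : Form → Prop
  | .tt => True
  | .ff => True
  | .fvar i => lo ≤ i ∧ i < hi
  | .pvar _ _ => True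
  | .not φ => φ.fvIn lo hi
  | .and φ ψ => φ.fvIn lo hi ∧ ψ.fvIn lo hi
  | .or φ ψ => φ.fvIn lo hi ∧ ψ.fvIn lo hi
  | .iff φ ψ => φ.fvIn lo hi ∧ ψ.fvIn lo hi

def TForm.fvIn (lo hi : ℕ) : TForm → Prop
  | .base φ => φ.fvIn lo hi
  | .pair a b => a.fvIn lo hi ∧ b.fvIn lo hi

/-- Leaf paths of a type. -/
def Ty.leaf : Ty → List Bool → Prop
  | .bool, [] => True
  | .prod τ1 _, false :: p => τ1.leaf p
  | .prod _ τ2, true :: p => τ2.leaf p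
  | _, _ => False

/-- A tuple of formulas shaped like a type. -/
def TForm.shaped : TForm → Ty → Prop
  | .base _, .bool => True
  | .pair a b, .prod τ1 τ2 => a.shaped τ1 ∧ b.shaped τ2
  | _, _ => False

/-- All program variables of a formula are leaf paths of their declared type. -/
def Form.pvOK (Γ : String → Option Ty) : Form → Prop
  | .tt => True
  | .ff => True
  | .fvar _ => True
  | .pvar y p => ∃ τ, Γ y = some τ ∧ τ.leaf p
  | .not φ => φ.pvOK Γ
  | .and φ ψ => φ.pvOK Γ ∧ ψ.pvOK Γ
  | .or φ ψ => φ.pvOK Γ ∧ ψ.pvOK Γ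
  | .iff φ ψ => φ.pvOK Γ ∧ ψ.pvOK Γ

def TForm.pvOK (Γ : String → Option Ty) : TForm → Prop
  | .base φ => φ.pvOK Γ
  | .pair a b => a.pvOK Γ ∧ b.pvOK Γ

/-- Read back a value from a tuple of formulas. -/
def TForm.readS (ρ : String → Val) (σ : ℕ → Bool) : TForm → Val
  | .base φ => .bool ((φ.substProg ρ).eval σ pfalse)
  | .pair a b => .pair (a.readS ρ σ) (b.readS ρ σ)

/-- Subvalue at a path. -/
def Val.sub : Val → List Bool → Option Val
  | v, [] => some v
  | .pair v1 _, false :: p => v1.sub p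
  | .pair _ v2, true :: p => v2.sub p
  | .bool _, _ :: _ => none

/-- Value of an atomic expression under a total environment. -/
def AExp.valOf (ρ : String → Val) : AExp → Val
  | .var x => ρ x
  | .val v => v

/-- Iterated weighted sum over the flip variables `n, …, n+k-1`:
each variable is summed out with its weights, starting from an all-false
assignment. -/
noncomputable def EV (w : ℕ → Bool → ℝ) : ℕ → ℕ → ((ℕ → Bool) → ℝ) → ℝ
  | _, 0, f => f (fun _ => false)
  | n, k+1, f => ∑ b : Bool, w n b * EV w (n+1) k (fun σ => f (Function.update σ n b))

/-! ### Basic lemmas -/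

theorem Form.eval_congr {lo hi : ℕ} {σ1 σ2 : ℕ → Bool} (π : String → List Bool → Bool)
    (hσ : ∀ i, lo ≤ i → i < hi → σ1 i = σ2 i) :
    ∀ {φ : Form}, φ.fvIn lo hi → φ.eval σ1 π = φ.eval σ2 π := by
  intro φ; induction φ <;> simp_all [Form.fvIn, Form.eval]

theorem Form.fvIn_mono {lo hi lo' hi' : ℕ} (h1 : lo' ≤ lo) (h2 : hi ≤ hi') :
    ∀ {φ : Form}, φ.fvIn lo hi → φ.fvIn lo' hi' := by
  intro φ; induction φ <;> simp_all [Form.fvIn] <;> omega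

theorem TForm.fvIn_mono {lo hi lo' hi' : ℕ} (h1 : lo' ≤ lo) (h2 : hi ≤ hi') :
    ∀ {t : TForm}, t.fvIn lo hi → t.fvIn lo' hi' := by
  intro t; induction t with
  | base φ => exact Form.fvIn_mono h1 h2
  | pair a b iha ihb => exact fun h => ⟨iha h.1, ihb h.2⟩

theorem Form.fvIn_of_closed {lo hi : ℕ} :
    ∀ {φ : Form}, φ.fvIn 0 0 → φ.fvIn lo hi := by
  intro φ; induction φ <;> simp_all [Form.fvIn]

theorem TForm.fvIn_of_closed {lo hi : ℕ} :
    ∀ {t : TForm}, t.fvIn 0 0 → t.fvIn lo hi := by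
  intro t; induction t with
  | base φ => exact Form.fvIn_of_closed
  | pair a b iha ihb => exact fun h => ⟨iha h.1, ihb h.2⟩

/-! ### EV lemmas -/

theorem EV_congr (w : ℕ → Bool → ℝ) (n k : ℕ) {f g : (ℕ → Bool) → ℝ}
    (h : ∀ σ, f σ = g σ) : EV w n k f = EV w n k g := by
  have : f = g := funext h
  rw [this]

theorem EV_add_fun (w : ℕ → Bool → ℝ) (k : ℕ) : ∀ (n : ℕ) (f g : (ℕ → Bool) → ℝ),
    EV w n k (fun σ => f σ + g σ) = EV w n k f + EV w n k g := by
  induction k with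
  | zero => intro n f g; simp [EV]
  | succ k ih =>
      intro n f g
      simp only [EV, ih]
      rw [← Finset.sum_add_distrib]
      exact Finset.sum_congr rfl (fun b _ => by ring)

theorem EV_zero (w : ℕ → Bool → ℝ) (k : ℕ) : ∀ (n : ℕ),
    EV w n k (fun _ => (0:ℝ)) = 0 := by
  induction k with
  | zero => intro n; simp [EV]
  | succ k ih => intro n; simp [EV, ih]

theorem EV_mul_const (w : ℕ → Bool → ℝ) (k : ℕ) : ∀ (n : ℕ) (c : ℝ) (f : (ℕ → Bool) → ℝ),
    EV w n k (fun σ => f σ * c) = EV w n k f * c := by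
  induction k with
  | zero => intro n c f; simp [EV]
  | succ k ih =>
      intro n c f
      simp only [EV, ih]
      rw [Finset.sum_mul]
      exact Finset.sum_congr rfl (fun b _ => by ring)

theorem EV_const_mul (w : ℕ → Bool → ℝ) (k : ℕ) (n : ℕ) (c : ℝ) (f : (ℕ → Bool) → ℝ) :
    EV w n k (fun σ => c * f σ) = c * EV w n k f := by
  rw [mul_comm c (EV w n k f), ← EV_mul_const]
  exact EV_congr _ _ _ (fun σ => mul_comm c (f σ))

/-- `EV` of a constant is the constant, provided the weights sum to one. -/
theorem EV_const (w : ℕ → Bool → ℝ) (k : ℕ) : ∀ (n : ℕ) (c : ℝ),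
    (∀ i, n ≤ i → i < n + k → w i true + w i false = 1) →
    EV w n k (fun _ => c) = c := by
  induction k with
  | zero => intro n c _; simp [EV]
  | succ k ih =>
      intro n c hw
      simp only [EV]
      rw [show (fun σ : ℕ → Bool => (fun _ : ℕ → Bool => c) (Function.update σ n true)) = fun _ => c from rfl]
      have h1 : ∀ b : Bool, EV w (n+1) k (fun σ => (fun _ : ℕ → Bool => c) (Function.update σ n b)) = c := by
        intro b
        exact ih (n+1) c (fun i h1 h2 => hw i (by omega) (by omega))
      rw [Fintype.sum_bool, h1 true]
      have := hw n (le_refl n) (by omega)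
      linear_combination c * this

/-- `EV w n k f` only applies `f` to assignments that vanish outside
`[n, n+k)`. -/
theorem EV_congr' (w : ℕ → Bool → ℝ) (k : ℕ) : ∀ (n : ℕ) (f g : (ℕ → Bool) → ℝ),
    (∀ σ : ℕ → Bool, (∀ i, i < n ∨ n + k ≤ i → σ i = false) → f σ = g σ) →
    EV w n k f = EV w n k g := by
  induction k with
  | zero =>
      intro n f g h
      simp only [EV]
      exact h _ (fun i _ => rfl)
  | succ k ih =>
      intro n f g h
      simp only [EV]
      refine Finset.sum_congr rfl (fun b _ => ?_)
      congr 1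
      refine ih (n+1) _ _ (fun σ hσ => ?_)
      refine h _ (fun i hi => ?_)
      rw [Function.update_apply]
      have hin : i ≠ n := by omega
      simp [hin]
      exact hσ i (by omega)

/-- Merge of two assignments at a threshold. -/
def merge (m : ℕ) (σ1 σ2 : ℕ → Bool) : ℕ → Bool := fun i => if i < m then σ1 i else σ2 i

theorem EV_split (w : ℕ → Bool → ℝ) (k1 : ℕ) : ∀ (k2 n : ℕ) (f : (ℕ → Bool) → ℝ),
    EV w n (k1 + k2) f
      = EV w n k1 (fun σ1 => EV w (n + k1) k2 (fun σ2 => f (merge (n + k1) σ1 σ2))) := by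
  induction k1 with
  | zero =>
      intro k2 n f
      simp only [Nat.zero_add, Nat.add_zero, EV]
      refine EV_congr' _ _ _ _ _ (fun σ2 hσ => ?_)
      congr 1
      funext i
      simp only [merge]
      split
      · exact hσ i (Or.inl ‹_›)
      · rfl
  | succ k1 ih =>
      intro k2 n f
      have : k1 + 1 + k2 = (k1 + k2) + 1 := by omega
      rw [this]
      simp only [EV]
      refine Finset.sum_congr rfl (fun b _ => ?_)
      rw [ih k2 (n+1)]
      congr 1
      have hn : n + 1 + k1 = n + (k1 + 1) := by omega
      rw [hn]
      refine EV_congr _ _ _ (fun σ1 => ?_)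
      refine EV_congr _ _ _ (fun σ2 => ?_)
      congr 1
      funext i
      by_cases hi : i = n
      · subst hi; simp [merge, Function.update]
      · simp [merge, Function.update, hi]

/-! ### EV as a sum over finite assignments -/

theorem EV_list_sum (w : ℕ → Bool → ℝ) (n k : ℕ) {α : Type*} (l : List α)
    (g : α → (ℕ → Bool) → ℝ) :
    EV w n k (fun σ => (l.map (fun a => g a σ)).sum)
      = (l.map (fun a => EV w n k (g a))).sum := by
  induction l with
  | nil => simpa using EV_zero w k n
  | cons a l ih =>
      simp only [List.map_cons, List.sum_cons]
      rw [← ih, ← EV_add_fun]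

theorem EV_eq_sum (w : ℕ → Bool → ℝ) (k : ℕ) : ∀ (n : ℕ) (f : (ℕ → Bool) → ℝ),
    EV w n k f = ∑ σ : Fin k → Bool, (∏ i : Fin k, w (n + i) (σ i)) *
      f (fun j => if h : n ≤ j ∧ j - n < k then σ ⟨j - n, h.2⟩ else false) := by
  induction k with
  | zero =>
      intro n f
      have h1 : ∀ σ0 : Fin 0 → Bool,
          (fun j => if h : n ≤ j ∧ j - n < 0 then σ0 ⟨j - n, h.2⟩ else false)
            = (fun _ : ℕ => false) := by
        intro σ0; funext j; rw [dif_neg (by omega)]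
      rw [show (EV w n 0 f) = f (fun _ => false) from rfl, Fintype.sum_unique]
      simp only [Finset.univ_eq_empty, Finset.prod_empty, one_mul, h1]
  | succ k ih =>
      intro n f
      simp only [EV, ih]
      rw [← (Fin.consEquiv (fun _ : Fin (k+1) => Bool)).sum_comp
        (fun σ : Fin (k+1) → Bool => (∏ i : Fin (k+1), w (n + i) (σ i)) *
          f (fun j => if h : n ≤ j ∧ j - n < k+1 then σ ⟨j - n, h.2⟩ else false))]
      rw [Fintype.sum_prod_type]
      refine Finset.sum_congr rfl (fun b _ => ?_)
      rw [Finset.mul_sum]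
      refine Finset.sum_congr rfl (fun σ _ => ?_)
      have hprod : (∏ i : Fin (k+1), w (n + i) ((Fin.consEquiv (fun _ => Bool)) (b, σ) i))
          = w n b * ∏ i : Fin k, w (n + 1 + i) (σ i) := by
        rw [Fin.prod_univ_succ]
        simp only [Fin.consEquiv_apply, Fin.cons_zero, Fin.cons_succ, Fin.val_zero,
          Nat.add_zero, Fin.val_succ]
        congr 1
        exact Finset.prod_congr rfl (fun i _ => by rw [show n + (↑i + 1) = n + 1 + ↑i by omega])
      rw [hprod, mul_assoc]
      have harg : (Function.update
            (fun j => if h : n + 1 ≤ j ∧ j - (n + 1) < k then σ ⟨j - (n + 1), h.2⟩ else false) n b)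
          = (fun j => if h : n ≤ j ∧ j - n < k + 1 then
              (Fin.consEquiv fun _ => Bool) (b, σ) ⟨j - n, h.2⟩ else false) := by
        funext j
        rcases Nat.lt_trichotomy j n with hj | hj | hj
        · rw [Function.update_apply, if_neg (by omega), dif_neg (by omega), dif_neg (by omega)]
        · subst hj
          rw [Function.update_self, dif_pos ⟨le_refl j, by omega⟩]
          simp
        · rw [Function.update_apply, if_neg (by omega)]
          by_cases hk : j - n < k + 1
          · rw [dif_pos ⟨(by omega : n + 1 ≤ j), (by omega : j - (n+1) < k)⟩,
              dif_pos ⟨(by omega : n ≤ j), hk⟩]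
            simp only [Fin.consEquiv_apply]
            have : (⟨j - n, hk⟩ : Fin (k+1)) = Fin.succ ⟨j - (n+1), by omega⟩ := by
              apply Fin.ext
              simp [Fin.val_succ]
              omega
            rw [this, Fin.cons_succ]
          · rw [dif_neg (by omega), dif_neg (by omega)]
      rw [harg]

theorem WMC_eq_EV (n : ℕ) (φ : Form) (w : ℕ → Bool → ℝ) :
    WMC n φ w = EV w 0 n (fun σ => if φ.eval σ pfalse then 1 else 0) := by
  rw [WMC, EV_eq_sum]
  refine Finset.sum_congr rfl (fun σ _ => ?_)
  have harg : (fun j => if h : 0 ≤ j ∧ j - 0 < n then σ ⟨j - 0, h.2⟩ else false)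
      = (fun i => if h : i < n then σ ⟨i, h⟩ else false) := by
    funext j
    by_cases h : j < n
    · rw [dif_pos ⟨Nat.zero_le j, by omega⟩, dif_pos h]
      exact congrArg σ (Fin.ext (Nat.sub_zero j))
    · rw [dif_neg (by omega), dif_neg h]
  have hprod : (∏ i : Fin n, w (0 + ↑i) (σ i)) = ∏ i : Fin n, w ↑i (σ i) := by
    exact Finset.prod_congr rfl (fun i _ => by rw [Nat.zero_add])
  rw [harg, hprod]
  unfold pfalse
  split <;> ring

/-! ### Values and types -/

theorem Val.mem_vals : ∀ (τ : Ty) (v : Val), v ∈ τ.vals ↔ v.hasTy τ = true := by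
  intro τ
  induction τ with
  | bool =>
      intro v
      cases v with
      | bool b => cases b <;> simp [Ty.vals, Val.hasTy]
      | pair v1 v2 => simp [Ty.vals, Val.hasTy]
  | prod τ1 τ2 ih1 ih2 =>
      intro v
      cases v with
      | bool b => simp [Ty.vals, Val.hasTy]
      | pair v1 v2 =>
          simp only [Ty.vals, List.mem_flatMap, List.mem_map, Val.hasTy, Bool.and_eq_true]
          constructor
          · rintro ⟨u1, hu1, u2, hu2, heq⟩
            cases heq
            exact ⟨(ih1 v1).1 hu1, (ih2 v2).1 hu2⟩
          · rintro ⟨h1, h2⟩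
            exact ⟨v1, (ih1 v1).2 h1, v2, (ih2 v2).2 h2, rfl⟩

theorem nodup_flatMap {α β : Type*} (l : List α) (f : α → List β) (hl : l.Nodup)
    (hf : ∀ a ∈ l, (f a).Nodup)
    (hdisj : ∀ a ∈ l, ∀ b ∈ l, a ≠ b → ∀ x ∈ f a, x ∉ f b) :
    (l.flatMap f).Nodup := by
  induction l with
  | nil => simp
  | cons a l ih =>
      rw [List.flatMap_cons]
      rcases List.nodup_cons.1 hl with ⟨ha, hl'⟩
      refine (hf a (by simp)).append
        (ih hl' (fun b hb => hf b (by simp [hb]))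
          (fun b hb c hc => hdisj b (by simp [hb]) c (by simp [hc]))) ?_
      intro x hx hx'
      rcases List.mem_flatMap.1 hx' with ⟨b, hb, hxb⟩
      exact hdisj a (by simp) b (by simp [hb]) (fun h => ha (h ▸ hb)) x hx hxb

theorem Ty.vals_nodup : ∀ (τ : Ty), τ.vals.Nodup := by
  intro τ
  induction τ with
  | bool => simp [Ty.vals]
  | prod τ1 τ2 ih1 ih2 =>
      refine nodup_flatMap _ _ ih1 (fun v1 _ => ih2.map (fun a b h => by injection h)) ?_
      intro a _ b _ hab x hx hx'
      rcases List.mem_map.1 hx with ⟨u, _, rfl⟩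
      rcases List.mem_map.1 hx' with ⟨u', _, h⟩
      injection h with h1 h2
      exact hab h1.symm

theorem sum_pick {g : Val → ℝ} : ∀ (l : List Val) (r : Val), l.Nodup → r ∈ l →
    (∀ v' ∈ l, v' ≠ r → g v' = 0) → (l.map g).sum = g r := by
  intro l
  induction l with
  | nil => intro r _ h; simp at h
  | cons a l ih =>
      intro r hnd hr h0
      rcases List.nodup_cons.1 hnd with ⟨ha, hl⟩
      rcases List.mem_cons.1 hr with rfl | hr'
      · have : ∀ v' ∈ l, g v' = 0 := fun v' hv' => h0 v' (by simp [hv']) (fun h => ha (h ▸ hv'))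
        simp only [List.map_cons, List.sum_cons]
        rw [List.sum_eq_zero (fun x hx => by
          rcases List.mem_map.1 hx with ⟨v', hv', rfl⟩; exact this v' hv')]
        ring
      · simp only [List.map_cons, List.sum_cons]
        rw [h0 a (by simp) (fun h => ha (h ▸ hr')), ih r hl hr'
          (fun v' hv' => h0 v' (by simp [hv']))]
        ring

/-! ### readS, lookup, tiff -/

theorem TForm.readS_hasTy (ρ : String → Val) (σ : ℕ → Bool) :
    ∀ {t : TForm} {τ : Ty}, t.shaped τ → (t.readS ρ σ).hasTy τ = true := by
  intro t
  induction t with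
  | base φ => intro τ h; cases τ with
      | bool => simp [TForm.readS, Val.hasTy]
      | prod τ1 τ2 => exact absurd h (by simp [TForm.shaped])
  | pair a b iha ihb => intro τ h; cases τ with
      | bool => exact absurd h (by simp [TForm.shaped])
      | prod τ1 τ2 =>
          obtain ⟨h1, h2⟩ := h
          simp [TForm.readS, Val.hasTy, iha h1, ihb h2]

theorem Val.toForm_eval (b : Bool) (σ : ℕ → Bool) (π : String → List Bool → Bool) :
    (if b then Form.tt else Form.ff).eval σ π = b := by
  cases b <;> rfl

/-- `tiff` against a value's formula evaluates (after program substitution)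
to the comparison with the read-back value. -/
theorem tiff_eval (ρ : String → Val) (σ : ℕ → Bool) :
    ∀ {τ : Ty} {t : TForm} {v : Val}, t.shaped τ → v.hasTy τ = true →
      ((((t.tiff v.toForm).substProg ρ).eval σ pfalse) = true ↔ t.readS ρ σ = v) := by
  intro τ
  induction τ with
  | bool =>
      intro t v ht hv
      cases t with
      | pair a b => exact absurd ht (by simp [TForm.shaped])
      | base φ =>
          cases v with
          | pair v1 v2 => exact absurd hv (by simp [Val.hasTy])
          | bool b =>
              simp only [Val.toForm, TForm.tiff, Form.substProg, Form.eval, TForm.readS]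
              constructor
              · intro h
                have hb : ((if b then Form.tt else Form.ff).substProg ρ) = (if b then Form.tt else Form.ff) := by
                  cases b <;> rfl
                rw [hb, Val.toForm_eval] at h
                simp only [beq_iff_eq] at h
                rw [h]
              · intro h
                injection h with h'
                have hb : ((if b then Form.tt else Form.ff).substProg ρ) = (if b then Form.tt else Form.ff) := by
                  cases b <;> rfl
                rw [hb, Val.toForm_eval, h']
                simp
  | prod τ1 τ2 ih1 ih2 =>
      intro t v ht hv
      cases t with
      | base φ => exact absurd ht (by simp [TForm.shaped])
      | pair a b =>
          cases v with
          | bool b' => exact absurd hv (by simp [Val.hasTy])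
          | pair v1 v2 =>
              obtain ⟨ht1, ht2⟩ := ht
              rw [Val.hasTy, Bool.and_eq_true] at hv
              simp only [Val.toForm, TForm.tiff, Form.substProg, Form.eval, TForm.readS,
                Bool.and_eq_true]
              rw [ih1 ht1 hv.1, ih2 ht2 hv.2]
              constructor
              · rintro ⟨h1, h2⟩; rw [h1, h2]
              · intro h; injection h with h1 h2; exact ⟨h1, h2⟩

/-! ### Lookup and leaf paths -/

theorem TForm.lookup_leaf (ρ : String → Val) (σ : ℕ → Bool) :
    ∀ {τ : Ty} {p : List Bool} {t : TForm}, t.shaped τ → τ.leaf p →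
      ∃ φp b, t.lookup p = some φp ∧ (t.readS ρ σ).toForm.lookup p = some (if b then Form.tt else Form.ff) ∧
        (φp.substProg ρ).eval σ pfalse = b := by
  intro τ
  induction τ with
  | bool =>
      intro p t ht hp
      cases t with
      | pair a b => exact absurd ht (by simp [TForm.shaped])
      | base φ =>
          cases p with
          | nil =>
              exact ⟨φ, (φ.substProg ρ).eval σ pfalse, rfl, rfl, rfl⟩
          | cons c p => exact absurd hp (by simp [Ty.leaf])
  | prod τ1 τ2 ih1 ih2 =>
      intro p t ht hp
      cases t with
      | base φ => exact absurd ht (by simp [TForm.shaped])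
      | pair a b =>
          obtain ⟨ht1, ht2⟩ := ht
          cases p with
          | nil => exact absurd hp (by simp [Ty.leaf])
          | cons c p =>
              cases c with
              | false =>
                  obtain ⟨φp, b', h1, h2, h3⟩ := ih1 ht1 hp
                  exact ⟨φp, b', h1, h2, h3⟩
              | true =>
                  obtain ⟨φp, b', h1, h2, h3⟩ := ih2 ht2 hp
                  exact ⟨φp, b', h1, h2, h3⟩

/-- The main substitution lemma: typed substitution followed by program
substitution agrees with program substitution by the read-back value. -/
theorem tsubst_eval (Γ : String → Option Ty) (x : String) (τ1 : Ty) (t1 : TForm)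
    (ρ : String → Val) (σ : ℕ → Bool) (v' : Val)
    (hsh : t1.shaped τ1) (hr : t1.readS ρ σ = v') :
    ∀ {φ : Form}, φ.pvOK (fun y => if y = x then some τ1 else Γ y) →
      ((φ.tsubst x t1).substProg ρ).eval σ pfalse
        = (φ.substProg (Function.update ρ x v')).eval σ pfalse := by
  intro φ
  induction φ with
  | tt => intro _; rfl
  | ff => intro _; rfl
  | fvar i => intro _; rfl
  | pvar y p =>
      intro hok
      obtain ⟨τ, hτ, hleaf⟩ := hok
      by_cases hyx : y = x
      · subst hyx
        have hτ' : τ = τ1 := by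
          simp only [if_pos rfl] at hτ
          exact (Option.some.inj hτ).symm
        subst hτ'
        obtain ⟨φp, b, h1, h2, h3⟩ := TForm.lookup_leaf ρ σ hsh hleaf
        have hts : (Form.pvar y p).tsubst y t1 = φp := by
          simp [Form.tsubst, h1]
        rw [hts, h3]
        simp only [Form.substProg, Function.update_self, ← hr, h2, Option.getD_some]
        rw [Val.toForm_eval]
      · simp only [Form.tsubst, if_neg hyx, Form.substProg, Function.update_of_ne hyx]
  | not φ ih => intro hok; simp only [Form.tsubst, Form.substProg, Form.eval, ih hok]
  | and φ ψ ihφ ihψ =>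
      intro hok
      simp only [Form.tsubst, Form.substProg, Form.eval, ihφ hok.1, ihψ hok.2]
  | or φ ψ ihφ ihψ =>
      intro hok
      simp only [Form.tsubst, Form.substProg, Form.eval, ihφ hok.1, ihψ hok.2]
  | iff φ ψ ihφ ihψ =>
      intro hok
      simp only [Form.tsubst, Form.substProg, Form.eval, ihφ hok.1, ihψ hok.2]

/-! ### tsubst distributes over tiff; toForm is unaffected -/

theorem Val.toForm_tsubst (x : String) (t : TForm) :
    ∀ (v : Val), v.toForm.tsubst x t = v.toForm := by
  intro v
  induction v with
  | bool b => cases b <;> rfl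
  | pair v1 v2 ih1 ih2 => simp [Val.toForm, TForm.tsubst, ih1, ih2]

theorem tiff_tsubst (x : String) (t : TForm) :
    ∀ (a b : TForm), (a.tiff b).tsubst x t = (a.tsubst x t).tiff (b.tsubst x t) := by
  intro a
  induction a with
  | base φ => intro b; cases b <;> rfl
  | pair a1 a2 ih1 ih2 =>
      intro b
      cases b with
      | base φ => rfl
      | pair b1 b2 => simp [TForm.tiff, TForm.tsubst, Form.tsubst, ih1, ih2]

/-! ### Shape / fvIn / pvOK preservation -/

theorem TForm.shaped_band {φ : Form} : ∀ {t : TForm} {τ : Ty}, t.shaped τ → (t.band φ).shaped τ := by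
  intro t
  induction t with
  | base ψ => intro τ h; cases τ <;> simpa [TForm.band, TForm.shaped] using h
  | pair a b iha ihb =>
      intro τ h
      cases τ with
      | bool => exact absurd h (by simp [TForm.shaped])
      | prod τ1 τ2 => exact ⟨iha h.1, ihb h.2⟩

theorem TForm.shaped_tor : ∀ {t s : TForm} {τ : Ty}, t.shaped τ → s.shaped τ → (t.tor s).shaped τ := by
  intro t
  induction t with
  | base ψ =>
      intro s τ ht hs
      cases τ <;> cases s <;> simp_all [TForm.shaped, TForm.tor]
  | pair a b iha ihb =>
      intro s τ ht hs
      cases τ with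
      | bool => exact absurd ht (by simp [TForm.shaped])
      | prod τ1 τ2 =>
          cases s with
          | base ψ => exact absurd hs (by simp [TForm.shaped])
          | pair c d => exact ⟨iha ht.1 hs.1, ihb ht.2 hs.2⟩

theorem TForm.shaped_tsubst {x : String} {t1 : TForm} :
    ∀ {t : TForm} {τ : Ty}, t.shaped τ → (t.tsubst x t1).shaped τ := by
  intro t
  induction t with
  | base φ => intro τ h; cases τ <;> simpa [TForm.tsubst, TForm.shaped] using h
  | pair a b iha ihb =>
      intro τ h
      cases τ with
      | bool => exact absurd h (by simp [TForm.shaped])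
      | prod τ1 τ2 => exact ⟨iha h.1, ihb h.2⟩

theorem Form.fvIn_substProg {lo hi : ℕ} {ρ : String → Val} :
    ∀ {φ : Form}, φ.fvIn lo hi → (φ.substProg ρ).fvIn lo hi := by
  have hval : ∀ (v : Val) (p : List Bool), (Form.fvIn lo hi ((v.toForm.lookup p).getD .ff)) := by
    intro v
    induction v with
    | bool b =>
        intro p
        cases p with
        | nil => cases b <;> trivial
        | cons c p => cases c <;> trivial
    | pair v1 v2 ih1 ih2 =>
        intro p
        cases p with
        | nil => trivial
        | cons c p => cases c with
          | false => exact ih1 p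
          | true => exact ih2 p
  intro φ
  induction φ with
  | tt => intro _; trivial
  | ff => intro _; trivial
  | fvar i => exact id
  | pvar y p => intro _; exact hval _ _
  | not φ ih => exact ih
  | and φ ψ ihφ ihψ => exact fun h => ⟨ihφ h.1, ihψ h.2⟩
  | or φ ψ ihφ ihψ => exact fun h => ⟨ihφ h.1, ihψ h.2⟩
  | iff φ ψ ihφ ihψ => exact fun h => ⟨ihφ h.1, ihψ h.2⟩

theorem TForm.fvIn_lookup {lo hi : ℕ} :
    ∀ {t : TForm} {p : List Bool} {φ : Form}, t.fvIn lo hi → t.lookup p = some φ → φ.fvIn lo hi := by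
  intro t
  induction t with
  | base ψ =>
      intro p φ ht hl
      cases p with
      | nil => cases Option.some.inj hl; exact ht
      | cons c p => simp [TForm.lookup] at hl
  | pair a b iha ihb =>
      intro p φ ht hl
      cases p with
      | nil => simp [TForm.lookup] at hl
      | cons c p => cases c with
        | false => exact iha ht.1 hl
        | true => exact ihb ht.2 hl

theorem Form.fvIn_tsubst {lo hi : ℕ} {x : String} {t1 : TForm} (ht1 : t1.fvIn lo hi) :
    ∀ {φ : Form}, φ.fvIn lo hi → (φ.tsubst x t1).fvIn lo hi := by
  intro φ
  induction φ with
  | tt => intro _; trivial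
  | ff => intro _; trivial
  | fvar i => exact id
  | pvar y p =>
      intro _
      simp only [Form.tsubst]
      split
      · rcases hl : t1.lookup p with _ | φp
        · simp [hl]; trivial
        · simp only [hl, Option.getD_some]; exact TForm.fvIn_lookup ht1 hl
      · trivial
  | not φ ih => exact ih
  | and φ ψ ihφ ihψ => exact fun h => ⟨ihφ h.1, ihψ h.2⟩
  | or φ ψ ihφ ihψ => exact fun h => ⟨ihφ h.1, ihψ h.2⟩
  | iff φ ψ ihφ ihψ => exact fun h => ⟨ihφ h.1, ihψ h.2⟩

theorem TForm.fvIn_tsubst {lo hi : ℕ} {x : String} {t1 : TForm} (ht1 : t1.fvIn lo hi) :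
    ∀ {t : TForm}, t.fvIn lo hi → (t.tsubst x t1).fvIn lo hi := by
  intro t
  induction t with
  | base φ => exact Form.fvIn_tsubst ht1
  | pair a b iha ihb => exact fun h => ⟨iha h.1, ihb h.2⟩

theorem TForm.fvIn_band {lo hi : ℕ} {φ : Form} (hφ : φ.fvIn lo hi) :
    ∀ {t : TForm}, t.fvIn lo hi → (t.band φ).fvIn lo hi := by
  intro t
  induction t with
  | base ψ => exact fun h => ⟨hφ, h⟩
  | pair a b iha ihb => exact fun h => ⟨iha h.1, ihb h.2⟩

theorem Form.fvIn_not {lo hi : ℕ} {φ : Form} (hφ : φ.fvIn lo hi) : (Form.not φ).fvIn lo hi := hφ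

theorem TForm.fvIn_tor {lo hi : ℕ} :
    ∀ {t s : TForm}, t.fvIn lo hi → s.fvIn lo hi → (t.tor s).fvIn lo hi := by
  intro t
  induction t with
  | base ψ =>
      intro s ht hs
      cases s with
      | base ψ' => exact ⟨ht, hs⟩
      | pair c d => exact ht
  | pair a b iha ihb =>
      intro s ht hs
      cases s with
      | base ψ' => exact ht
      | pair c d => exact ⟨iha ht.1 hs.1, ihb ht.2 hs.2⟩

theorem TForm.fvIn_tiff {lo hi : ℕ} :
    ∀ {t s : TForm}, t.fvIn lo hi → s.fvIn lo hi → (t.tiff s).fvIn lo hi := by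
  intro t
  induction t with
  | base ψ =>
      intro s ht hs
      cases s with
      | base ψ' => exact ⟨ht, hs⟩
      | pair c d => trivial
  | pair a b iha ihb =>
      intro s ht hs
      cases s with
      | base ψ' => trivial
      | pair c d => exact ⟨iha ht.1 hs.1, ihb ht.2 hs.2⟩

theorem Val.toForm_fvIn {lo hi : ℕ} : ∀ (v : Val), v.toForm.fvIn lo hi := by
  intro v
  induction v with
  | bool b => cases b <;> trivial
  | pair v1 v2 ih1 ih2 => exact ⟨ih1, ih2⟩

/-! ### pvOK preservation -/

theorem TForm.pvOK_lookup {Γ : String → Option Ty} :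
    ∀ {t : TForm} {p : List Bool} {φ : Form}, t.pvOK Γ → t.lookup p = some φ → φ.pvOK Γ := by
  intro t
  induction t with
  | base ψ =>
      intro p φ ht hl
      cases p with
      | nil => cases Option.some.inj hl; exact ht
      | cons c p => simp [TForm.lookup] at hl
  | pair a b iha ihb =>
      intro p φ ht hl
      cases p with
      | nil => simp [TForm.lookup] at hl
      | cons c p => cases c with
        | false => exact iha ht.1 hl
        | true => exact ihb ht.2 hl

theorem Form.pvOK_tsubst {Γ : String → Option Ty} {x : String} {τ1 : Ty} {t1 : TForm}
    (ht1 : t1.pvOK Γ) (hsh : t1.shaped τ1) :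
    ∀ {φ : Form}, φ.pvOK (fun y => if y = x then some τ1 else Γ y) → (φ.tsubst x t1).pvOK Γ := by
  intro φ
  induction φ with
  | tt => intro _; trivial
  | ff => intro _; trivial
  | fvar i => intro _; trivial
  | pvar y p =>
      intro hok
      obtain ⟨τ, hτ, hleaf⟩ := hok
      simp only [Form.tsubst]
      by_cases hyx : y = x
      · rw [if_pos hyx]
        subst hyx
        have hτ' : τ = τ1 := by
          simp only [if_pos rfl] at hτ
          exact (Option.some.inj hτ).symm
        subst hτ'
        obtain ⟨φp, b, h1, -, -⟩ :=
          TForm.lookup_leaf (fun _ => Val.bool false) (fun _ => false) hsh hleaf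
        simp only [h1, Option.getD_some]
        exact TForm.pvOK_lookup ht1 h1
      · rw [if_neg hyx]
        refine ⟨τ, ?_, hleaf⟩
        simpa [hyx] using hτ
  | not φ ih => exact ih
  | and φ ψ ihφ ihψ => exact fun h => ⟨ihφ h.1, ihψ h.2⟩
  | or φ ψ ihφ ihψ => exact fun h => ⟨ihφ h.1, ihψ h.2⟩
  | iff φ ψ ihφ ihψ => exact fun h => ⟨ihφ h.1, ihψ h.2⟩

theorem TForm.pvOK_tsubst {Γ : String → Option Ty} {x : String} {τ1 : Ty} {t1 : TForm}
    (ht1 : t1.pvOK Γ) (hsh : t1.shaped τ1) :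
    ∀ {t : TForm}, t.pvOK (fun y => if y = x then some τ1 else Γ y) → (t.tsubst x t1).pvOK Γ := by
  intro t
  induction t with
  | base φ => exact Form.pvOK_tsubst ht1 hsh
  | pair a b iha ihb => exact fun h => ⟨iha h.1, ihb h.2⟩

theorem TForm.pvOK_band {Γ : String → Option Ty} {φ : Form} (hφ : φ.pvOK Γ) :
    ∀ {t : TForm}, t.pvOK Γ → (t.band φ).pvOK Γ := by
  intro t
  induction t with
  | base ψ => exact fun h => ⟨hφ, h⟩
  | pair a b iha ihb => exact fun h => ⟨iha h.1, ihb h.2⟩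

theorem TForm.pvOK_tor {Γ : String → Option Ty} :
    ∀ {t s : TForm}, t.pvOK Γ → s.pvOK Γ → (t.tor s).pvOK Γ := by
  intro t
  induction t with
  | base ψ =>
      intro s ht hs
      cases s with
      | base ψ' => exact ⟨ht, hs⟩
      | pair c d => exact ht
  | pair a b iha ihb =>
      intro s ht hs
      cases s with
      | base ψ' => exact ht
      | pair c d => exact ⟨iha ht.1 hs.1, ihb ht.2 hs.2⟩

theorem Val.toForm_pvOK {Γ : String → Option Ty} : ∀ (v : Val), v.toForm.pvOK Γ := by
  intro v
  induction v with
  | bool b => cases b <;> trivial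
  | pair v1 v2 ih1 ih2 => exact ⟨ih1, ih2⟩

theorem TForm.pvOK_tiff {Γ : String → Option Ty} :
    ∀ {t s : TForm}, t.pvOK Γ → s.pvOK Γ → (t.tiff s).pvOK Γ := by
  intro t
  induction t with
  | base ψ =>
      intro s ht hs
      cases s with
      | base ψ' => exact ⟨ht, hs⟩
      | pair c d => trivial
  | pair a b iha ihb =>
      intro s ht hs
      cases s with
      | base ψ' => trivial
      | pair c d => exact ⟨iha ht.1 hs.1, ihb ht.2 hs.2⟩

/-! ### formVar and compT -/

theorem formVar_shaped (x : String) : ∀ (τ : Ty) (p : List Bool), (formVar x τ p).shaped τ := by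
  intro τ
  induction τ with
  | bool => intro p; trivial
  | prod τ1 τ2 ih1 ih2 => exact fun p => ⟨ih1 _, ih2 _⟩

theorem formVar_fvIn (x : String) {lo hi : ℕ} :
    ∀ (τ : Ty) (p : List Bool), (formVar x τ p).fvIn lo hi := by
  intro τ
  induction τ with
  | bool => intro p; trivial
  | prod τ1 τ2 ih1 ih2 => exact fun p => ⟨ih1 _, ih2 _⟩

theorem formVar_pvOK (Γ : String → Option Ty) (x : String) (τ0 : Ty) (hx : Γ x = some τ0) :
    ∀ (τ : Ty) (p : List Bool), (∀ r, τ.leaf r → τ0.leaf (p ++ r)) →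
      (formVar x τ p).pvOK Γ := by
  intro τ
  induction τ with
  | bool =>
      intro p h
      exact ⟨τ0, hx, by simpa using h [] trivial⟩
  | prod τ1 τ2 ih1 ih2 =>
      intro p h
      constructor
      · refine ih1 (p ++ [false]) (fun r hr => ?_)
        rw [List.append_assoc]
        exact h (false :: r) hr
      · refine ih2 (p ++ [true]) (fun r hr => ?_)
        rw [List.append_assoc]
        exact h (true :: r) hr

theorem Val.sub_toForm_lookup :
    ∀ (p : List Bool) (v : Val) (b : Bool), v.sub p = some (.bool b) →
      v.toForm.lookup p = some (if b then Form.tt else Form.ff) := by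
  intro p
  induction p with
  | nil =>
      intro v b h
      have : v = .bool b := by simpa [Val.sub] using h
      subst this
      rfl
  | cons c p ih =>
      intro v b h
      cases v with
      | bool b' => simp [Val.sub] at h
      | pair v1 v2 =>
          cases c with
          | false => exact ih v1 b h
          | true => exact ih v2 b h

theorem Val.sub_append : ∀ (p : List Bool) (v : Val) (q : List Bool),
    v.sub (p ++ q) = (v.sub p).bind (fun u => u.sub q) := by
  intro p
  induction p with
  | nil => intro v q; simp [Val.sub]
  | cons c p ih =>
      intro v q
      cases v with
      | bool b => cases c <;> rfl
      | pair v1 v2 => cases c with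
        | false => exact ih v1 q
        | true => exact ih v2 q

/-- Reading back the form of a variable gives the subvalue of the environment. -/
theorem formVar_readS (ρ : String → Val) (σ : ℕ → Bool) (x : String) :
    ∀ (τ : Ty) (p : List Bool) (u : Val), u.hasTy τ = true → (ρ x).sub p = some u →
      (formVar x τ p).readS ρ σ = u := by
  intro τ
  induction τ with
  | bool =>
      intro p u hty hsub
      cases u with
      | pair u1 u2 => simp [Val.hasTy] at hty
      | bool b =>
          simp only [formVar, TForm.readS, Form.substProg,
            Val.sub_toForm_lookup p (ρ x) b hsub, Option.getD_some, Val.toForm_eval]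
  | prod τ1 τ2 ih1 ih2 =>
      intro p u hty hsub
      cases u with
      | bool b => simp [Val.hasTy] at hty
      | pair u1 u2 =>
          rw [Val.hasTy, Bool.and_eq_true] at hty
          have hs1 : (ρ x).sub (p ++ [false]) = some u1 := by
            rw [Val.sub_append, hsub]
            simp [Val.sub, Option.bind]
          have hs2 : (ρ x).sub (p ++ [true]) = some u2 := by
            rw [Val.sub_append, hsub]
            simp [Val.sub, Option.bind]
          show Val.pair _ _ = Val.pair u1 u2
          rw [ih1 (p ++ [false]) u1 hty.1 hs1, ih2 (p ++ [true]) u2 hty.2 hs2]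

/-! ### compT specification -/

theorem Val.sub_nil (v : Val) : v.sub [] = some v := by cases v <;> rfl

theorem Val.toForm_readS (ρ : String → Val) (σ : ℕ → Bool) :
    ∀ (v : Val), v.toForm.readS ρ σ = v := by
  intro v
  induction v with
  | bool b => cases b <;> rfl
  | pair v1 v2 ih1 ih2 => simp [Val.toForm, TForm.readS, ih1, ih2]

theorem AExp.substEnv_total (ρ : String → Val) (a : AExp) :
    a.substEnv (fun x => some (ρ x)) = .val (a.valOf ρ) := by
  cases a <;> rfl

theorem AExp.compT_struct {Γ : String → Option Ty} {a : AExp} {τ : Ty} {t : TForm}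
    (h : a.compT Γ τ = some t) :
    t.shaped τ ∧ t.pvOK Γ ∧ t.fvIn 0 0 := by
  cases a with
  | var x =>
      rw [AExp.compT] at h
      split at h
      · cases Option.some.inj h
        exact ⟨formVar_shaped x τ [], formVar_pvOK Γ x τ ‹_› τ [] (fun r hr => hr),
          formVar_fvIn x τ []⟩
      · exact absurd h (by simp)
  | val v =>
      rw [AExp.compT] at h
      split at h
      · cases Option.some.inj h
        refine ⟨?_, Val.toForm_pvOK v, Val.toForm_fvIn v⟩
        rename_i hty
        clear h
        induction v generalizing τ with
        | bool b => cases τ with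
            | bool => trivial
            | prod τ1 τ2 => simp [Val.hasTy] at hty
        | pair v1 v2 ih1 ih2 => cases τ with
            | bool => simp [Val.hasTy] at hty
            | prod τ1 τ2 =>
                rw [Val.hasTy, Bool.and_eq_true] at hty
                exact ⟨ih1 hty.1, ih2 hty.2⟩
      · exact absurd h (by simp)
  
theorem AExp.compT_sem {Γ : String → Option Ty} {a : AExp} {τ : Ty} {t : TForm}
    (h : a.compT Γ τ = some t) (ρ : String → Val)
    (hρ : ∀ x τ', Γ x = some τ' → (ρ x).hasTy τ') :
    (a.valOf ρ).hasTy τ = true ∧ ∀ σ, t.readS ρ σ = a.valOf ρ := by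
  cases a with
  | var x =>
      rw [AExp.compT] at h
      split at h
      · cases Option.some.inj h
        rename_i hx
        refine ⟨hρ x τ hx, fun σ => ?_⟩
        exact formVar_readS ρ σ x τ [] (ρ x) (hρ x τ hx) (Val.sub_nil (ρ x))
      · exact absurd h (by simp)
  | val v =>
      rw [AExp.compT] at h
      split at h
      · cases Option.some.inj h
        exact ⟨‹_›, fun σ => Val.toForm_readS ρ σ v⟩
      · exact absurd h (by simp)

/-! ### TComp invariants -/

theorem TComp.inv {Γ : String → Option Ty} {e : Exp} {τ : Ty} {n m : ℕ}
    {t : TForm} {γ : Form} {w : ℕ → Bool → ℝ} (h : TComp Γ e τ n m t γ w) :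
    n ≤ m ∧ t.shaped τ ∧ t.fvIn n m ∧ γ.fvIn n m ∧ t.pvOK Γ ∧ γ.pvOK Γ ∧
      (∀ i, n ≤ i → i < m → w i true + w i false = 1) := by
  induction h with
  | atom Γ a τ t n w h =>
      obtain ⟨h1, h2, h3⟩ := AExp.compT_struct h
      exact ⟨le_refl n, h1, TForm.fvIn_of_closed h3, trivial, h2, trivial,
        fun i h1 h2 => absurd h1 (by omega)⟩
  | fst Γ a τ1 τ2 t1 t2 n w h =>
      obtain ⟨h1, h2, h3⟩ := AExp.compT_struct h
      exact ⟨le_refl n, h1.1, TForm.fvIn_of_closed h3.1, trivial, h2.1, trivial,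
        fun i h1 h2 => absurd h1 (by omega)⟩
  | snd Γ a τ1 τ2 t1 t2 n w h =>
      obtain ⟨h1, h2, h3⟩ := AExp.compT_struct h
      exact ⟨le_refl n, h1.2, TForm.fvIn_of_closed h3.2, trivial, h2.2, trivial,
        fun i h1 h2 => absurd h1 (by omega)⟩
  | pair Γ a1 a2 τ1 τ2 t1 t2 n w h1 h2 =>
      obtain ⟨h11, h12, h13⟩ := AExp.compT_struct h1
      obtain ⟨h21, h22, h23⟩ := AExp.compT_struct h2
      exact ⟨le_refl n, ⟨h11, h21⟩, ⟨TForm.fvIn_of_closed h13, TForm.fvIn_of_closed h23⟩,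
        trivial, ⟨h12, h22⟩, trivial, fun i h1 h2 => absurd h1 (by omega)⟩
  | flip Γ θ n w h0 h1 hwt hwf =>
      refine ⟨by omega, trivial, ⟨le_refl n, by omega⟩, trivial, trivial, trivial, ?_⟩
      intro i hi1 hi2
      have : i = n := by omega
      subst this
      rw [hwt, hwf]; ring
  | obs Γ a φa n w h =>
      obtain ⟨h1, h2, h3⟩ := AExp.compT_struct h
      exact ⟨le_refl n, trivial, trivial, Form.fvIn_of_closed h3, trivial, h2,
        fun i h1 h2 => absurd h1 (by omega)⟩
  | ite Γ a eT eE τ φg tT tE γT γE n m k w hg hT hE ihT ihE =>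
      obtain ⟨hgs, hgp, hgf⟩ := AExp.compT_struct hg
      obtain ⟨hnm, hTs, hTf, hγTf, hTp, hγTp, hTw⟩ := ihT
      obtain ⟨hmk, hEs, hEf, hγEf, hEp, hγEp, hEw⟩ := ihE
      refine ⟨by omega, TForm.shaped_tor (TForm.shaped_band hTs) (TForm.shaped_band hEs),
        TForm.fvIn_tor (TForm.fvIn_band (Form.fvIn_of_closed hgf) (TForm.fvIn_mono (le_refl n) hmk hTf))
          (TForm.fvIn_band (show (Form.not φg).fvIn n k from Form.fvIn_of_closed hgf)
            (TForm.fvIn_mono hnm (le_refl k) hEf)),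
        ⟨⟨Form.fvIn_of_closed hgf, Form.fvIn_mono (le_refl n) hmk hγTf⟩,
         ⟨Form.fvIn_of_closed hgf, Form.fvIn_mono hnm (le_refl k) hγEf⟩⟩,
        TForm.pvOK_tor (TForm.pvOK_band hgp hTp)
          (TForm.pvOK_band (show (Form.not φg).pvOK Γ from hgp) hEp),
        ⟨⟨hgp, hγTp⟩, ⟨hgp, hγEp⟩⟩, ?_⟩
      intro i hi1 hi2
      by_cases him : i < m
      · exact hTw i hi1 him
      · exact hEw i (by omega) hi2
  | letin Γ x τ1 τ2 e1 e2 t1 t2 γ1 γ2 n m k w h1 h2 ih1 ih2 =>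
      obtain ⟨hnm, h1s, h1f, hγ1f, h1p, hγ1p, h1w⟩ := ih1
      obtain ⟨hmk, h2s, h2f, hγ2f, h2p, hγ2p, h2w⟩ := ih2
      refine ⟨by omega, TForm.shaped_tsubst h2s,
        TForm.fvIn_tsubst (TForm.fvIn_mono (le_refl n) hmk h1f)
          (TForm.fvIn_mono hnm (le_refl k) h2f),
        ⟨Form.fvIn_mono (le_refl n) hmk hγ1f,
         Form.fvIn_tsubst (TForm.fvIn_mono (le_refl n) hmk h1f)
           (Form.fvIn_mono hnm (le_refl k) hγ2f)⟩,
        TForm.pvOK_tsubst h1p h1s h2p,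
        ⟨hγ1p, Form.pvOK_tsubst h1p h1s hγ2p⟩, ?_⟩
      intro i hi1 hi2
      by_cases him : i < m
      · exact h1w i hi1 him
      · exact h2w i (by omega) hi2

/-! ### Substitution composition -/

theorem AExp.substEnv_comp (a : AExp) (ρ1 ρ2 : String → Option Val) :
    (a.substEnv ρ1).substEnv ρ2 = a.substEnv (fun y => (ρ1 y).elim (ρ2 y) some) := by
  cases a with
  | val v => rfl
  | var x =>
      rcases h : ρ1 x with _ | v <;> simp [AExp.substEnv, h]

theorem Exp.substEnv_comp (e : Exp) : ∀ (ρ1 ρ2 : String → Option Val),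
    (e.substEnv ρ1).substEnv ρ2 = e.substEnv (fun y => (ρ1 y).elim (ρ2 y) some) := by
  induction e with
  | atom a => intro ρ1 ρ2; simp [Exp.substEnv, AExp.substEnv_comp]
  | fst a => intro ρ1 ρ2; simp [Exp.substEnv, AExp.substEnv_comp]
  | snd a => intro ρ1 ρ2; simp [Exp.substEnv, AExp.substEnv_comp]
  | pair a1 a2 => intro ρ1 ρ2; simp [Exp.substEnv, AExp.substEnv_comp]
  | flip θ => intro ρ1 ρ2; rfl
  | obs a => intro ρ1 ρ2; simp [Exp.substEnv, AExp.substEnv_comp]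
  | ite a e1 e2 ih1 ih2 =>
      intro ρ1 ρ2; simp [Exp.substEnv, AExp.substEnv_comp, ih1, ih2]
  | letin x τ e1 e2 ih1 ih2 =>
      intro ρ1 ρ2
      simp only [Exp.substEnv, ih1, ih2]
      have henv : (fun y => (if y = x then none else ρ1 y).elim
            (if y = x then none else ρ2 y) some)
          = (fun y => if y = x then none else (ρ1 y).elim (ρ2 y) some) := by
        funext y
        by_cases h : y = x <;> simp [h]
      rw [henv]

theorem Exp.substEnv_single (e : Exp) (ρ : String → Val) (x : String) (v' : Val) :
    ((e.substEnv (fun y => if y = x then none else some (ρ y))).substEnv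
        (fun y => if y = x then some v' else none))
      = e.substEnv (fun y => some (Function.update ρ x v' y)) := by
  rw [Exp.substEnv_comp]
  have henv : (fun y => ((if y = x then none else some (ρ y)) : Option Val).elim
        (if y = x then some v' else none) some)
      = (fun y => some (Function.update ρ x v' y)) := by
    funext y
    by_cases h : y = x <;> simp [h, Function.update_apply]
  rw [henv]

/-! ### readS of the if-then-else combination -/

theorem readS_tor_band (ρ : String → Val) (σ : ℕ → Bool) (φ : Form) :
    ∀ {τ : Ty} {tT tE : TForm}, tT.shaped τ → tE.shaped τ →
      ((tT.band φ).tor (tE.band (.not φ))).readS ρ σ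
        = if (φ.substProg ρ).eval σ pfalse then tT.readS ρ σ else tE.readS ρ σ := by
  intro τ
  induction τ with
  | bool =>
      intro tT tE hT hE
      cases tT with
      | pair a b => exact absurd hT (by simp [TForm.shaped])
      | base a =>
          cases tE with
          | pair c d => exact absurd hE (by simp [TForm.shaped])
          | base b =>
              simp only [TForm.band, TForm.tor, TForm.readS, Form.substProg, Form.eval]
              rcases hg : (φ.substProg ρ).eval σ pfalse <;> simp
  | prod τ1 τ2 ih1 ih2 =>
      intro tT tE hT hE
      cases tT with
      | base a => exact absurd hT (by simp [TForm.shaped])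
      | pair a b =>
          cases tE with
          | base c => exact absurd hE (by simp [TForm.shaped])
          | pair c d =>
              simp only [TForm.band, TForm.tor, TForm.readS, ih1 hT.1 hE.1, ih2 hT.2 hE.2]
              rcases hg : (φ.substProg ρ).eval σ pfalse <;> simp

/-! ### Semantics unfolding -/

theorem Exp.sem_flip (θ : ℝ) (b : Bool) : (Exp.flip θ).sem (.bool b) = if b then θ else 1 - θ := by
  simp [Exp.sem]

theorem Exp.sem_atom_val (v1 v : Val) : (Exp.atom (.val v1)).sem v = if v = v1 then 1 else 0 := by
  simp [Exp.sem]

/-! ### The key correctness lemma -/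

theorem bool_ext {x y : Bool} (h : x = true ↔ y = true) : x = y := by
  cases x <;> cases y <;> simp_all

theorem ind_mul_ind (x y z : Bool) :
    (if (x && (y && z)) = true then (1:ℝ) else 0)
      = (if (true && y) = true then (1:ℝ) else 0) * (if (x && z) = true then (1:ℝ) else 0) := by
  cases x <;> cases y <;> cases z <;> simp

theorem key : ∀ {Γ : String → Option Ty} {e : Exp} {τ : Ty} {n m : ℕ}
    {t : TForm} {γ : Form} {w : ℕ → Bool → ℝ}, TComp Γ e τ n m t γ w →
    ∀ (ρ : String → Val), (∀ x τ', Γ x = some τ' → (ρ x).hasTy τ') →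
    ∀ (v : Val), v.hasTy τ = true →
    (e.substEnv (fun x => some (ρ x))).sem v
      = EV w n (m - n) (fun σ =>
          if (((t.tiff v.toForm).and γ).substProg ρ).eval σ pfalse then 1 else 0) := by
  intro Γ e τ n m t γ w h
  induction h with
  | atom Γ a τ t n w hc =>
      intro ρ hρ v hv
      obtain ⟨hsh, -, -⟩ := AExp.compT_struct hc
      obtain ⟨hty, hread⟩ := AExp.compT_sem hc ρ hρ
      rw [Nat.sub_self]
      show _ = if (((t.tiff v.toForm).and .tt).substProg ρ).eval (fun _ => false) pfalse
          then (1:ℝ) else 0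
      rw [Exp.substEnv, AExp.substEnv_total]
      simp only [Exp.sem, Form.substProg, Form.eval, Bool.and_true]
      by_cases hveq : a.valOf ρ = v
      · rw [if_pos ((tiff_eval ρ _ hsh hv).2 ((hread _).trans hveq)), if_pos hveq.symm]
      · have hne : ¬((((t.tiff v.toForm).substProg ρ).eval (fun _ => false) pfalse) = true) :=
          fun hcon => hveq ((hread _).symm.trans ((tiff_eval ρ _ hsh hv).1 hcon))
        rw [if_neg hne, if_neg (fun hh => hveq hh.symm)]
  | fst Γ a τ1 τ2 t1 t2 n w hc =>
      intro ρ hρ v hv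
      obtain ⟨hsh, -, -⟩ := AExp.compT_struct hc
      obtain ⟨hty, hread⟩ := AExp.compT_sem hc ρ hρ
      rw [Nat.sub_self]
      show _ = if (((t1.tiff v.toForm).and .tt).substProg ρ).eval (fun _ => false) pfalse
          then (1:ℝ) else 0
      rw [Exp.substEnv, AExp.substEnv_total]
      rcases hva : a.valOf ρ with ⟨b⟩ | ⟨u1, u2⟩
      · rw [hva] at hty; simp [Val.hasTy] at hty
      rw [hva] at hty
      rw [Val.hasTy, Bool.and_eq_true] at hty
      have hr1 : t1.readS ρ (fun _ => false) = u1 := by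
        have := (hread (fun _ => false)).trans hva
        injection this
      simp only [Exp.sem, Form.substProg, Form.eval, Bool.and_true]
      by_cases hveq : u1 = v
      · rw [if_pos ((tiff_eval ρ _ hsh.1 hv).2 (hr1.trans hveq)), if_pos hveq.symm]
      · have hne : ¬((((t1.tiff v.toForm).substProg ρ).eval (fun _ => false) pfalse) = true) :=
          fun hcon => hveq (hr1.symm.trans ((tiff_eval ρ _ hsh.1 hv).1 hcon))
        rw [if_neg hne, if_neg (fun hh => hveq hh.symm)]
  | snd Γ a τ1 τ2 t1 t2 n w hc =>
      intro ρ hρ v hv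
      obtain ⟨hsh, -, -⟩ := AExp.compT_struct hc
      obtain ⟨hty, hread⟩ := AExp.compT_sem hc ρ hρ
      rw [Nat.sub_self]
      show _ = if (((t2.tiff v.toForm).and .tt).substProg ρ).eval (fun _ => false) pfalse
          then (1:ℝ) else 0
      rw [Exp.substEnv, AExp.substEnv_total]
      rcases hva : a.valOf ρ with ⟨b⟩ | ⟨u1, u2⟩
      · rw [hva] at hty; simp [Val.hasTy] at hty
      rw [hva] at hty
      rw [Val.hasTy, Bool.and_eq_true] at hty
      have hr2 : t2.readS ρ (fun _ => false) = u2 := by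
        have := (hread (fun _ => false)).trans hva
        injection this
      simp only [Exp.sem, Form.substProg, Form.eval, Bool.and_true]
      by_cases hveq : u2 = v
      · rw [if_pos ((tiff_eval ρ _ hsh.2 hv).2 (hr2.trans hveq)), if_pos hveq.symm]
      · have hne : ¬((((t2.tiff v.toForm).substProg ρ).eval (fun _ => false) pfalse) = true) :=
          fun hcon => hveq (hr2.symm.trans ((tiff_eval ρ _ hsh.2 hv).1 hcon))
        rw [if_neg hne, if_neg (fun hh => hveq hh.symm)]
  | pair Γ a1 a2 τ1 τ2 t1 t2 n w hc1 hc2 =>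
      intro ρ hρ v hv
      obtain ⟨hsh1, -, -⟩ := AExp.compT_struct hc1
      obtain ⟨hsh2, -, -⟩ := AExp.compT_struct hc2
      obtain ⟨hty1, hread1⟩ := AExp.compT_sem hc1 ρ hρ
      obtain ⟨hty2, hread2⟩ := AExp.compT_sem hc2 ρ hρ
      rw [Nat.sub_self]
      show _ = if ((((TForm.pair t1 t2).tiff v.toForm).and .tt).substProg ρ).eval
          (fun _ => false) pfalse then (1:ℝ) else 0
      rw [Exp.substEnv, AExp.substEnv_total, AExp.substEnv_total]
      have hsh : (TForm.pair t1 t2).shaped (Ty.prod τ1 τ2) := ⟨hsh1, hsh2⟩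
      have hread : (TForm.pair t1 t2).readS ρ (fun _ => false)
          = Val.pair (a1.valOf ρ) (a2.valOf ρ) := by
        show Val.pair _ _ = _
        rw [hread1, hread2]
      simp only [Exp.sem, Form.substProg, Form.eval, Bool.and_true]
      by_cases hveq : Val.pair (a1.valOf ρ) (a2.valOf ρ) = v
      · rw [if_pos ((tiff_eval ρ _ hsh hv).2 (hread.trans hveq)), if_pos hveq.symm]
      · have hne : ¬(((((TForm.pair t1 t2).tiff v.toForm).substProg ρ).eval
            (fun _ => false) pfalse) = true) :=
          fun hcon => hveq (hread.symm.trans ((tiff_eval ρ _ hsh hv).1 hcon))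
        rw [if_neg hne, if_neg (fun hh => hveq hh.symm)]
  | flip Γ θ n w h0 h1 hwt hwf =>
      intro ρ hρ v hv
      rcases v with ⟨c⟩ | ⟨v1, v2⟩
      case pair => simp [Val.hasTy] at hv
      rw [show n + 1 - n = 1 by omega]
      show (Exp.flip θ).sem (.bool c) = ∑ b : Bool, w n b *
        (if ((((TForm.base (.fvar n)).tiff (Val.bool c).toForm).and .tt).substProg ρ).eval
            (Function.update (fun _ => false) n b) pfalse then (1:ℝ) else 0)
      have hev : ∀ b : Bool,
          ((((TForm.base (.fvar n)).tiff (Val.bool c).toForm).and .tt).substProg ρ).eval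
            (Function.update (fun _ => false) n b) pfalse = (b == c) := by
        intro b
        cases c <;> cases b <;>
          simp [Val.toForm, TForm.tiff, Form.substProg, Form.eval, Function.update_self]
      rw [Exp.sem_flip]
      rw [Fintype.sum_bool, hev true, hev false]
      cases c <;> simp [hwt, hwf]
  | obs Γ a φa n w hc =>
      intro ρ hρ v hv
      obtain ⟨hty, hread⟩ := AExp.compT_sem hc ρ hρ
      rcases v with ⟨c⟩ | ⟨v1, v2⟩
      case pair => simp [Val.hasTy] at hv
      rcases hva : a.valOf ρ with ⟨b0⟩ | ⟨u1, u2⟩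
      case pair => rw [hva] at hty; simp [Val.hasTy] at hty
      have hb0 : (φa.substProg ρ).eval (fun _ => false) pfalse = b0 := by
        have := (hread (fun _ => false)).trans hva
        injection this
      rw [Nat.sub_self]
      show _ = if ((((TForm.base .tt).tiff (Val.bool c).toForm).and φa).substProg ρ).eval
          (fun _ => false) pfalse then (1:ℝ) else 0
      rw [Exp.substEnv, AExp.substEnv_total, hva]
      have hform : ((((TForm.base .tt).tiff (Val.bool c).toForm).and φa).substProg ρ).eval
          (fun _ => false) pfalse = (c && b0) := by
        cases c <;> simp [Val.toForm, TForm.tiff, Form.substProg, Form.eval, hb0]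
      rw [hform]
      cases b0 <;> cases c <;> simp [Exp.sem]
  | ite Γ a eT eE τ φg tT tE γT γE n m k w hg hT hE ihT ihE =>
      intro ρ hρ v hv
      obtain ⟨hgty, hgread⟩ := AExp.compT_sem hg ρ hρ
      obtain ⟨hnm, hTs, hTf, hγTf, -, -, hTw⟩ := hT.inv
      obtain ⟨hmk, hEs, hEf, hγEf, -, -, hEw⟩ := hE.inv
      rcases hva : a.valOf ρ with ⟨g⟩ | ⟨u1, u2⟩
      case pair => rw [hva] at hgty; simp [Val.hasTy] at hgty
      have hgev : ∀ σ, (φg.substProg ρ).eval σ pfalse = g := by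
        intro σ
        have := (hgread σ).trans hva
        injection this
      have hsh : ((tT.band φg).tor (tE.band (.not φg))).shaped τ :=
        TForm.shaped_tor (TForm.shaped_band hTs) (TForm.shaped_band hEs)
      rw [Exp.substEnv, AExp.substEnv_total, hva]
      have hcond : ∀ σ,
          (((((tT.band φg).tor (tE.band (.not φg))).tiff v.toForm).and
              (.or (.and φg γT) (.and (.not φg) γE))).substProg ρ).eval σ pfalse
          = (if g
             then (((tT.tiff v.toForm).and γT).substProg ρ).eval σ pfalse
             else (((tE.tiff v.toForm).and γE).substProg ρ).eval σ pfalse) := by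
        intro σ
        have hread : ((tT.band φg).tor (tE.band (.not φg))).readS ρ σ
            = if g then tT.readS ρ σ else tE.readS ρ σ := by
          rw [readS_tor_band ρ σ φg hTs hEs, hgev σ]
        have htiffbig :
            ((((tT.band φg).tor (tE.band (.not φg))).tiff v.toForm).substProg ρ).eval σ pfalse
            = if g then (((tT.tiff v.toForm).substProg ρ).eval σ pfalse)
                   else (((tE.tiff v.toForm).substProg ρ).eval σ pfalse) := by
          cases g with
          | true =>
              rw [if_pos rfl] at hread
              simp only [if_pos rfl]
              exact bool_ext ((tiff_eval ρ σ hsh hv).trans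
                (hread ▸ (tiff_eval ρ σ hTs hv).symm))
          | false =>
              rw [if_neg (by simp)] at hread
              rw [if_neg (by simp)]
              exact bool_ext ((tiff_eval ρ σ hsh hv).trans
                (hread ▸ (tiff_eval ρ σ hEs hv).symm))
        have hγbig : (((Form.or (.and φg γT) (.and (.not φg) γE)).substProg ρ)).eval σ pfalse
            = if g then (γT.substProg ρ).eval σ pfalse else (γE.substProg ρ).eval σ pfalse := by
          simp only [Form.substProg, Form.eval, hgev σ]
          cases g <;> simp
        simp only [Form.substProg, Form.eval]
        rw [htiffbig, hgev σ]
        cases g <;> simp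
      cases g with
      | true =>
          have hpoint : ∀ σ,
              (if (((((tT.band φg).tor (tE.band (.not φg))).tiff v.toForm).and
                  (.or (.and φg γT) (.and (.not φg) γE))).substProg ρ).eval σ pfalse
                then (1:ℝ) else 0)
              = (if (((tT.tiff v.toForm).and γT).substProg ρ).eval σ pfalse
                then (1:ℝ) else 0) := by
            intro σ
            exact congrArg (fun b : Bool => if b = true then (1:ℝ) else 0)
              ((hcond σ).trans (if_pos rfl))
          rw [EV_congr _ _ _ hpoint]
          simp only [Exp.sem]
          rw [ihT ρ hρ v hv]
          rw [show k - n = (m - n) + (k - m) by omega, EV_split,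
            show n + (m - n) = m by omega]
          refine EV_congr _ _ _ (fun σ1 => ?_)
          have hfv : (((tT.tiff v.toForm).and γT).substProg ρ).fvIn n m :=
            Form.fvIn_substProg ⟨TForm.fvIn_tiff hTf (Val.toForm_fvIn v), hγTf⟩
          have hconst : ∀ σ2 : ℕ → Bool,
              (if (((tT.tiff v.toForm).and γT).substProg ρ).eval (merge m σ1 σ2) pfalse
                then (1:ℝ) else 0)
              = (if (((tT.tiff v.toForm).and γT).substProg ρ).eval σ1 pfalse
                then (1:ℝ) else 0) := by
            intro σ2
            rw [Form.eval_congr (σ1 := merge m σ1 σ2) (σ2 := σ1) pfalse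
              (fun i h1 h2 => by simp [merge, h2]) hfv]
          rw [EV_congr _ _ _ hconst]
          exact (EV_const w (k - m) m _ (fun i h1 h2 => hEw i h1 (by omega))).symm
      | false =>
          have hpoint : ∀ σ,
              (if (((((tT.band φg).tor (tE.band (.not φg))).tiff v.toForm).and
                  (.or (.and φg γT) (.and (.not φg) γE))).substProg ρ).eval σ pfalse
                then (1:ℝ) else 0)
              = (if (((tE.tiff v.toForm).and γE).substProg ρ).eval σ pfalse
                then (1:ℝ) else 0) := by
            intro σ
            exact congrArg (fun b : Bool => if b = true then (1:ℝ) else 0)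
              ((hcond σ).trans (if_neg (by simp)))
          rw [EV_congr _ _ _ hpoint]
          simp only [Exp.sem]
          rw [ihE ρ hρ v hv]
          rw [show k - n = (m - n) + (k - m) by omega, EV_split,
            show n + (m - n) = m by omega]
          have hfv : (((tE.tiff v.toForm).and γE).substProg ρ).fvIn m k :=
            Form.fvIn_substProg ⟨TForm.fvIn_tiff hEf (Val.toForm_fvIn v), hγEf⟩
          have hinner : ∀ σ1, EV w m (k - m) (fun σ2 =>
              (if (((tE.tiff v.toForm).and γE).substProg ρ).eval (merge m σ1 σ2) pfalse
                then (1:ℝ) else 0))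
              = EV w m (k - m) (fun σ2 =>
                (if (((tE.tiff v.toForm).and γE).substProg ρ).eval σ2 pfalse
                  then (1:ℝ) else 0)) := by
            intro σ1
            refine EV_congr _ _ _ (fun σ2 => ?_)
            rw [Form.eval_congr (σ1 := merge m σ1 σ2) (σ2 := σ2) pfalse
              (fun i h1 h2 => by simp [merge, Nat.not_lt.2 h1]) hfv]
          rw [EV_congr _ _ _ hinner]
          exact (EV_const w (m - n) n _ (fun i h1 h2 => hTw i h1 (by omega))).symm
  | letin Γ x τ1 τ2 e1 e2 t1 t2 γ1 γ2 n m k w h1 h2 ih1 ih2 =>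
      intro ρ hρ v hv
      obtain ⟨hnm, h1s, h1f, hγ1f, h1p, hγ1p, h1w⟩ := h1.inv
      obtain ⟨hmk, h2s, h2f, hγ2f, h2p, hγ2p, h2w⟩ := h2.inv
      set A : Val → (ℕ → Bool) → ℝ := fun v' σ =>
        if (((t1.tiff v'.toForm).and γ1).substProg ρ).eval σ pfalse then 1 else 0 with hA
      set B : Val → (ℕ → Bool) → ℝ := fun v' σ =>
        if (((t2.tiff v.toForm).and γ2).substProg (Function.update ρ x v')).eval σ pfalse
          then 1 else 0 with hB
      have hform : (t2.tsubst x t1).tiff v.toForm = (t2.tiff v.toForm).tsubst x t1 := by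
        rw [tiff_tsubst, Val.toForm_tsubst]
      have hpoint : ∀ σ,
          (if ((((t2.tsubst x t1).tiff v.toForm).and (.and γ1 (γ2.tsubst x t1))).substProg ρ).eval
              σ pfalse then (1:ℝ) else 0)
          = (τ1.vals.map (fun v' => A v' σ * B v' σ)).sum := by
        intro σ
        set r : Val := t1.readS ρ σ with hr
        have hrty : r.hasTy τ1 = true := TForm.readS_hasTy ρ σ h1s
        rw [sum_pick τ1.vals r (Ty.vals_nodup τ1) ((Val.mem_vals τ1 r).2 hrty) ?_]
        · -- the term at `r`
          have e1 := tsubst_eval Γ x τ1 t1 ρ σ r h1s hr.symm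
            (φ := t2.tiff v.toForm) (TForm.pvOK_tiff h2p (Val.toForm_pvOK v))
          have e2 := tsubst_eval Γ x τ1 t1 ρ σ r h1s hr.symm (φ := γ2) hγ2p
          have hB' : B r σ = if ((((t2.tiff v.toForm).tsubst x t1).substProg ρ).eval σ pfalse
              && ((γ2.tsubst x t1).substProg ρ).eval σ pfalse) then (1:ℝ) else 0 := by
            simp only [hB]
            show (if ((((t2.tiff v.toForm).substProg (Function.update ρ x r)).eval σ pfalse)
                && ((γ2.substProg (Function.update ρ x r)).eval σ pfalse)) = true
                then (1:ℝ) else 0) = _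
            rw [e1, e2]
          have hA' : A r σ = if (true && (γ1.substProg ρ).eval σ pfalse) then (1:ℝ) else 0 := by
            simp only [hA]
            have htt : (((t1.tiff r.toForm).substProg ρ).eval σ pfalse) = true :=
              (tiff_eval ρ σ h1s hrty).2 rfl
            show (if ((((t1.tiff r.toForm).substProg ρ).eval σ pfalse)
                && ((γ1.substProg ρ).eval σ pfalse)) = true then (1:ℝ) else 0) = _
            rw [htt]
          rw [hA', hB', hform]
          show (if ((((t2.tiff v.toForm).tsubst x t1).substProg ρ).eval σ pfalse
              && (((γ1.substProg ρ).eval σ pfalse)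
                && ((γ2.tsubst x t1).substProg ρ).eval σ pfalse)) = true
            then (1:ℝ) else 0) = _
          exact ind_mul_ind _ _ _
        · -- other terms vanish
          intro v' hv' hne
          have hvty' : v'.hasTy τ1 = true := (Val.mem_vals τ1 v').1 hv'
          have hfalse : (((t1.tiff v'.toForm).substProg ρ).eval σ pfalse) = false := by
            rcases hb : (((t1.tiff v'.toForm).substProg ρ).eval σ pfalse) with _ | _
            · rfl
            · exact absurd ((tiff_eval ρ σ h1s hvty').1 hb) (fun hh => hne (hr ▸ hh ▸ rfl))
          have hA0 : A v' σ = 0 := by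
            simp only [hA]
            show (if ((((t1.tiff v'.toForm).substProg ρ).eval σ pfalse)
                && ((γ1.substProg ρ).eval σ pfalse)) = true then (1:ℝ) else 0) = 0
            rw [hfalse]
            simp
          rw [hA0, zero_mul]
      -- now compute
      rw [Exp.substEnv]
      simp only [Exp.sem]
      rw [EV_congr _ _ _ hpoint, EV_list_sum]
      refine congrArg List.sum (List.map_congr_left (fun v' hv' => ?_))
      have hvty' : v'.hasTy τ1 = true := (Val.mem_vals τ1 v').1 hv'
      have hρ' : ∀ y τ', (fun y => if y = x then some τ1 else Γ y) y = some τ' →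
          (Function.update ρ x v' y).hasTy τ' := by
        intro y τ' hy
        by_cases hyx : y = x
        · subst hyx
          simp only [if_pos rfl] at hy
          cases Option.some.inj hy
          rw [Function.update_self]
          exact hvty'
        · simp only [if_neg hyx] at hy
          rw [Function.update_of_ne hyx]
          exact hρ y τ' hy
      rw [Exp.substEnv_single e2 ρ x v']
      rw [ih1 ρ hρ v' hvty', ih2 (Function.update ρ x v') hρ' v hv]
      rw [show k - n = (m - n) + (k - m) by omega, EV_split,
        show n + (m - n) = m by omega]
      have hAf : (((t1.tiff v'.toForm).and γ1).substProg ρ).fvIn n m :=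
        Form.fvIn_substProg ⟨TForm.fvIn_tiff h1f (Val.toForm_fvIn v'), hγ1f⟩
      have hBf : (((t2.tiff v.toForm).and γ2).substProg (Function.update ρ x v')).fvIn m k :=
        Form.fvIn_substProg ⟨TForm.fvIn_tiff h2f (Val.toForm_fvIn v), hγ2f⟩
      have hinner : ∀ σ1, EV w m (k - m) (fun σ2 => A v' (merge m σ1 σ2) * B v' (merge m σ1 σ2))
          = A v' σ1 * EV w m (k - m) (B v') := by
        intro σ1
        rw [← EV_const_mul]
        refine EV_congr _ _ _ (fun σ2 => ?_)
        have hA1 : A v' (merge m σ1 σ2) = A v' σ1 := by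
          simp only [hA]
          rw [Form.eval_congr (σ1 := merge m σ1 σ2) (σ2 := σ1) pfalse
            (fun i hi1 hi2 => by simp [merge, hi2]) hAf]
        have hB1 : B v' (merge m σ1 σ2) = B v' σ2 := by
          simp only [hB]
          rw [Form.eval_congr (σ1 := merge m σ1 σ2) (σ2 := σ2) pfalse
            (fun i hi1 hi2 => by simp [merge, Nat.not_lt.2 hi1]) hBf]
        rw [hA1, hB1]
      rw [EV_congr _ _ _ hinner, EV_mul_const]


/-- **Typed Correctness Without Functions.**  If a Dice expression `e`
(Booleans and tuples, no function calls) compiles as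
`{xi : τi} ⊢ e : τ ⤳ (φ̂, γ, w)`, then for any well-typed values `vi : τi`
(given by the environment `ρ`) and any value `v : τ`, the unnormalized
semantics satisfies
`⟦e[xi ↦ vi]⟧(v) = WMC(((φ̂ ⇔τ v) ∧ γ)[xi ↦τi vi], w)`. -/
theorem typed_correctness_without_functions
    (Γ : String → Option Ty) (e : Exp) (τ : Ty) (n : ℕ)
    (t : TForm) (γ : Form) (w : ℕ → Bool → ℝ)
    (h : TComp Γ e τ 0 n t γ w)
    (ρ : String → Val) (hρ : ∀ x τ', Γ x = some τ' → (ρ x).hasTy τ')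
    (v : Val) (hv : v.hasTy τ) :
    (e.substEnv (fun x => some (ρ x))).sem v
      = WMC n (((t.tiff v.toForm).and γ).substProg ρ) w := by
  rw [WMC_eq_EV]
  have hk := key h ρ hρ v hv
  rwa [Nat.sub_zero] at hk
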